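/- Let 𝔄 = (W,R,V) be a transitive structure and define, for fixed propositional formulas χ₁,…,χ_m and bounds D₁,…,D_m, the function d^j(w) = min(D_j+1, |{v : R* w v and 𝔄 ⊨_v χ_j}|), where R* is the reflexive closure of R. Let R_d = {(w₁,w₂) ∈ R | d^j(w₁) = d^j(w₂) for all j}, and let R' be the transitive closure of R ∪ R_d⁻¹. Then in the resulting structure 𝔄' = (W, R', V), the chain length of strict R'-successors is bounded: any sequence w₀,…,w_k in which each w_i is a strict R'-successor of w_{i−1} has k ≤ Σ_j D_j + m. -/

import Mathlib

/-- `dcount S χ D w = min (D + 1, |{v : S* w v and χ v}|)`, where `S*` is the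
    reflexive closure of `S`. -/
noncomputable def dcount {W : Type} (S : W → W → Prop) (χ : W → Prop) (D : ℕ)
    (w : W) : ℕ∞ :=
  min ((D : ℕ∞) + 1) {v | (v = w ∨ S w v) ∧ χ v}.encard

theorem stmt12 {W : Type} (R : W → W → Prop) (hTr : Transitive R)
    (m : ℕ) (χ : Fin m → W → Prop) (D : Fin m → ℕ)
    (Rd : W → W → Prop)
    (hRd : ∀ w₁ w₂, Rd w₁ w₂ ↔
      (R w₁ w₂ ∧ ∀ j, dcount R (χ j) (D j) w₁ = dcount R (χ j) (D j) w₂))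
    (R' : W → W → Prop)
    (hR' : ∀ w₁ w₂, R' w₁ w₂ ↔ Relation.TransGen (fun a b => R a b ∨ Rd b a) w₁ w₂) :
    ∀ k, ∀ ws : Fin (k + 1) → W,
      (∀ i : Fin k, R' (ws i.castSucc) (ws i.succ) ∧ ¬ R' (ws i.succ) (ws i.castSucc)) →
      k ≤ (∑ j, D j) + m := by
  intro k ws hws
  set r : W → W → Prop := fun a b => R a b ∨ Rd b a with hr
  set d : Fin m → W → ℕ∞ := fun j w => dcount R (χ j) (D j) w with hdd
  have hdle : ∀ j w, d j w ≤ (D j : ℕ∞) + 1 := fun j w => min_le_left _ _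
  have hdlt : ∀ j w, d j w < ⊤ := by
    intro j w
    exact lt_of_le_of_lt (hdle j w) (by exact_mod_cast WithTop.coe_lt_top (D j + 1))
  have hmono : ∀ a b, R a b → ∀ j, d j b ≤ d j a := by
    intro a b hab j
    refine min_le_min le_rfl (Set.encard_mono ?_)
    rintro v ⟨hv | hv, hχ⟩
    · exact ⟨Or.inr (hv ▸ hab), hχ⟩
    · exact ⟨Or.inr (hTr hab hv), hχ⟩
  have hstep : ∀ a b, r a b → ∀ j, d j b ≤ d j a := by
    intro a b hab j
    rcases hab with h | h
    · exact hmono a b h j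
    · exact le_of_eq (((hRd b a).mp h).2 j)
  have hTGle : ∀ a b, Relation.TransGen r a b → ∀ j, d j b ≤ d j a := by
    intro a b hab
    induction hab with
    | single h => exact hstep _ _ h
    | tail h h' ih => exact fun j => le_trans (hstep _ _ h' j) (ih j)
  have hrevstep : ∀ a b, r a b → (∀ j, d j a = d j b) → r b a := by
    intro a b hab heq
    rcases hab with h | h
    · exact Or.inr ((hRd a b).mpr ⟨h, heq⟩)
    · exact Or.inl ((hRd b a).mp h).1
  have hrev : ∀ a b, Relation.TransGen r a b → (∀ j, d j a = d j b) →
      Relation.TransGen r b a := by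
    intro a b hab
    induction hab with
    | single h => exact fun heq => Relation.TransGen.single (hrevstep _ _ h heq)
    | @tail b c h h' ih =>
      intro heq
      have hbc : ∀ j, d j b = d j c := by
        intro j
        exact le_antisymm (le_trans (hTGle _ _ h j) (le_of_eq (heq j)))
          (hstep _ _ h' j)
      have hab' : ∀ j, d j _ = d j b := fun j => (heq j).trans (hbc j).symm
      exact Relation.TransGen.head (hrevstep _ _ h' hbc) (ih hab')
  -- strict decrease of d values along the chain
  have hstrict : ∀ i : Fin k, (∀ j, d j (ws i.succ) ≤ d j (ws i.castSucc)) ∧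
      ∃ j, d j (ws i.succ) < d j (ws i.castSucc) := by
    intro i
    obtain ⟨h1, h2⟩ := hws i
    rw [hR'] at h1 h2
    refine ⟨hTGle _ _ h1, ?_⟩
    by_contra hno
    push_neg at hno
    have heq : ∀ j, d j (ws i.castSucc) = d j (ws i.succ) := fun j =>
      le_antisymm (hno j) (hTGle _ _ h1 j)
    exact h2 (hrev _ _ h1 heq)
  -- the natural-number sum
  set f : W → ℕ := fun w => ∑ j, (d j w).toNat with hf
  have hfbound : ∀ w, f w ≤ (∑ j, D j) + m := by
    intro w
    have : f w ≤ ∑ j : Fin m, (D j + 1) := by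
      refine Finset.sum_le_sum fun j _ => ?_
      have := hdle j w
      have h1 : d j w ≤ ((D j + 1 : ℕ) : ℕ∞) := by exact_mod_cast this
      have hne : ((D j + 1 : ℕ) : ℕ∞) ≠ ⊤ := (WithTop.coe_lt_top _).ne
      simpa using (ENat.toNat_le_toNat h1 hne).trans_eq (ENat.toNat_coe _)
    simpa [Finset.sum_add_distrib] using this
  have hfdec : ∀ i : Fin k, f (ws i.succ) < f (ws i.castSucc) := by
    intro i
    obtain ⟨hle, j0, hlt⟩ := hstrict i
    refine Finset.sum_lt_sum (fun j _ => ?_) ⟨j0, Finset.mem_univ j0, ?_⟩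
    · exact ENat.toNat_le_toNat (hle j) (hdlt j _).ne
    · rw [← Nat.cast_lt (α := ℕ∞), ENat.coe_toNat (hdlt j0 _).ne,
        ENat.coe_toNat (hdlt j0 _).ne]
      exact hlt
  have key : ∀ n, (hn : n ≤ k) → n + f (ws ⟨n, Nat.lt_succ_of_le hn⟩) ≤ f (ws 0) := by
    intro n
    induction n with
    | zero => intro hn; simp [show (⟨0, Nat.lt_succ_of_le hn⟩ : Fin (k+1)) = 0 from rfl]
    | succ n ih =>
      intro hn
      have hn' : n < k := hn
      have hdec := hfdec ⟨n, hn'⟩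
      have h1 : (⟨n, Nat.lt_succ_of_le hn'.le⟩ : Fin (k+1)) = (⟨n, hn'⟩ : Fin k).castSucc := rfl
      have h2 : (⟨n + 1, Nat.lt_succ_of_le hn⟩ : Fin (k+1)) = (⟨n, hn'⟩ : Fin k).succ := rfl
      calc n + 1 + f (ws ⟨n + 1, Nat.lt_succ_of_le hn⟩)
          ≤ n + f (ws ⟨n, Nat.lt_succ_of_le hn'.le⟩) := by
            rw [h1, h2]; omega
        _ ≤ f (ws 0) := ih hn'.le
  have := key k le_rfl
  have hb := hfbound (ws 0)
  omega
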